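/- arXiv:1503.06376 — 3 statements merged into one kernel-verified Lean document; each statement's English description precedes it below -/
import Mathlib

section
/- For any real number v, the principal value integral (1/π) ∫_{-∞}^{∞} (1 - cos(u v))/u² du equals |v|. -/
open MeasureTheory Real Set Filter

private lemma kac_exp_deriv (c x : ℝ) :
    HasDerivAt (fun t : ℝ => Real.exp (-(c * t))) (Real.exp (-(c * x)) * -c) x := by
  simpa using (((hasDerivAt_id x).const_mul c).neg).exp

private lemma kac_exp_tendsto {c : ℝ} (hc : 0 < c) :
    Tendsto (fun t : ℝ => Real.exp (-(c * t))) atTop (nhds 0) :=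
  Real.tendsto_exp_atBot.comp
    (tendsto_neg_atTop_atBot.comp (Tendsto.const_mul_atTop hc tendsto_id))

private lemma kac_mul_exp_tendsto {c : ℝ} (hc : 0 < c) :
    Tendsto (fun t : ℝ => t * Real.exp (-(c * t))) atTop (nhds 0) := by
  have h := tendsto_rpow_mul_exp_neg_mul_atTop_nhds_zero 1 c hc
  refine h.congr' ?_
  filter_upwards [eventually_gt_atTop (0:ℝ)] with t ht
  rw [Real.rpow_one, neg_mul]

/-- Laplace: `∫_{0}^{∞} t e^{-ut} dt = 1/u²`, plus integrability. -/
private lemma kac_lap1 {u : ℝ} (hu : 0 < u) :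
    (∫ t in Ioi (0:ℝ), t * Real.exp (-(u * t))) = 1 / u ^ 2 ∧
      IntegrableOn (fun t : ℝ => t * Real.exp (-(u * t))) (Ioi (0:ℝ)) := by
  set F : ℝ → ℝ := fun t => -(t / u) * Real.exp (-(u * t)) - 1 / u ^ 2 * Real.exp (-(u * t))
    with hF
  have hderiv : ∀ x ∈ Ici (0:ℝ), HasDerivAt F (x * Real.exp (-(u * x))) x := by
    intro x _
    have he := kac_exp_deriv u x
    have h1 := (((hasDerivAt_id x).div_const u).neg.mul he)
    have h2 := he.const_mul (1 / u ^ 2)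
    have h3 := h1.sub h2
    have h3' : HasDerivAt F _ x := h3
    convert h3' using 1
    have hu' : u ≠ 0 := hu.ne'
    simp only [Pi.neg_apply, id]
    field_simp
    ring
  have hpos : ∀ x ∈ Ioi (0:ℝ), 0 ≤ x * Real.exp (-(u * x)) := fun x hx =>
    mul_nonneg (le_of_lt hx) (Real.exp_pos _).le
  have hlim : Tendsto F atTop (nhds 0) := by
    have h1 := (kac_mul_exp_tendsto hu).const_mul (-(1 / u))
    have h2 := (kac_exp_tendsto hu).const_mul (-(1 / u ^ 2))
    have h3 := h1.add h2
    simp only [mul_zero, add_zero] at h3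
    refine h3.congr fun t => ?_
    simp only [hF]; ring
  refine ⟨?_, integrableOn_Ioi_deriv_of_nonneg' hderiv hpos hlim⟩
  rw [integral_Ioi_of_hasDerivAt_of_nonneg' hderiv hpos hlim]
  simp [hF]

/-- Laplace: `∫_{0}^{∞} e^{-tu}(1-cos u) du = 1/t - t/(t²+1)`, plus integrability. -/
private lemma kac_lap2 {t : ℝ} (ht : 0 < t) :
    (∫ u in Ioi (0:ℝ), Real.exp (-(t * u)) * (1 - Real.cos u))
      = 1 / t - t / (t ^ 2 + 1) ∧
      IntegrableOn (fun u : ℝ => Real.exp (-(t * u)) * (1 - Real.cos u)) (Ioi (0:ℝ)) := by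
  have ht' : t ≠ 0 := ht.ne'
  have htsq : (0:ℝ) < t ^ 2 + 1 := by positivity
  set F : ℝ → ℝ := fun u => -(Real.exp (-(t * u)) / t)
      + Real.exp (-(t * u)) * (t * Real.cos u - Real.sin u) / (t ^ 2 + 1) with hF
  have hderiv : ∀ x ∈ Ici (0:ℝ), HasDerivAt F (Real.exp (-(t * x)) * (1 - Real.cos x)) x := by
    intro x _
    have he := kac_exp_deriv t x
    have htrig : HasDerivAt (fun u : ℝ => t * Real.cos u - Real.sin u)
        (t * -Real.sin x - Real.cos x) x :=
      ((Real.hasDerivAt_cos x).const_mul t).sub (Real.hasDerivAt_sin x)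
    have h3 := ((he.div_const t).neg).add ((he.mul htrig).div_const (t ^ 2 + 1))
    have h3' : HasDerivAt F _ x := h3
    convert h3' using 1
    field_simp
    ring
  have hpos : ∀ x ∈ Ioi (0:ℝ), 0 ≤ Real.exp (-(t * x)) * (1 - Real.cos x) := fun x _ =>
    mul_nonneg (Real.exp_pos _).le (by nlinarith [Real.cos_le_one x])
  have hlim : Tendsto F atTop (nhds 0) := by
    set C : ℝ := 1 / t + (t + 1) / (t ^ 2 + 1) with hC
    have hbnd : ∀ u : ℝ, ‖F u‖ ≤ C * Real.exp (-(t * u)) := by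
      intro u
      have hE : (0:ℝ) < Real.exp (-(t * u)) := Real.exp_pos _
      have hFu : F u = Real.exp (-(t * u))
          * (-(1 / t) + (t * Real.cos u - Real.sin u) / (t ^ 2 + 1)) := by
        simp only [hF]; ring
      rw [Real.norm_eq_abs, hFu, abs_mul, abs_of_pos hE, mul_comm C _]
      refine mul_le_mul_of_nonneg_left ?_ hE.le
      have h1 : |t * Real.cos u - Real.sin u| ≤ t + 1 := by
        calc |t * Real.cos u - Real.sin u| ≤ |t * Real.cos u| + |Real.sin u| := abs_sub _ _
          _ = |t| * |Real.cos u| + |Real.sin u| := by rw [abs_mul]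
          _ ≤ t * 1 + 1 := by
              rw [abs_of_pos ht]
              exact add_le_add
                (mul_le_mul_of_nonneg_left (Real.abs_cos_le_one u) ht.le)
                (Real.abs_sin_le_one u)
          _ = t + 1 := by ring
      calc |(-(1 / t) + (t * Real.cos u - Real.sin u) / (t ^ 2 + 1))|
          ≤ |(-(1 / t))| + |(t * Real.cos u - Real.sin u) / (t ^ 2 + 1)| := abs_add_le _ _
        _ = 1 / t + |t * Real.cos u - Real.sin u| / (t ^ 2 + 1) := by
            rw [abs_neg, abs_of_pos (by positivity), abs_div, abs_of_pos htsq]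
        _ ≤ 1 / t + (t + 1) / (t ^ 2 + 1) := by gcongr
        _ = C := rfl
    have hC0 : Tendsto (fun u : ℝ => C * Real.exp (-(t * u))) atTop (nhds 0) := by
      simpa using (kac_exp_tendsto ht).const_mul C
    exact squeeze_zero_norm hbnd hC0
  refine ⟨?_, integrableOn_Ioi_deriv_of_nonneg' hderiv hpos hlim⟩
  rw [integral_Ioi_of_hasDerivAt_of_nonneg' hderiv hpos hlim]
  simp only [hF]
  rw [mul_zero, neg_zero, Real.exp_zero, Real.cos_zero, Real.sin_zero]
  ring

private lemma kac_core : ∫ u in Ioi (0:ℝ), (1 - Real.cos u) / u ^ 2 = π / 2 := by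
  set μ := volume.restrict (Ioi (0:ℝ)) with hμ
  set g : ℝ → ℝ := fun u => (1 - Real.cos u) / u ^ 2 with hg
  have hgmeas : Measurable g := by
    apply Measurable.div
    · exact (continuous_const.sub Real.continuous_cos).measurable
    · exact (continuous_pow 2).measurable
  have hgnn : 0 ≤ᵐ[μ] g := by
    filter_upwards [ae_restrict_mem measurableSet_Ioi] with u _
    have h1 : Real.cos u ≤ 1 := Real.cos_le_one u
    have h2 : (0:ℝ) ≤ u ^ 2 := sq_nonneg u
    exact div_nonneg (by linarith) h2
  have cont : Continuous fun p : ℝ × ℝ =>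
      (1 - Real.cos p.1) * (p.2 * Real.exp (-(p.1 * p.2))) :=
    (continuous_const.sub (Real.continuous_cos.comp continuous_fst)).mul
      (continuous_snd.mul (Real.continuous_exp.comp (continuous_fst.mul continuous_snd).neg))
  have hFmeas : AEMeasurable (fun p : ℝ × ℝ =>
      ENNReal.ofReal ((1 - Real.cos p.1) * (p.2 * Real.exp (-(p.1 * p.2))))) (μ.prod μ) :=
    (ENNReal.measurable_ofReal.comp cont.measurable).aemeasurable
  have swap := lintegral_lintegral_swap (μ := μ) (ν := μ)
    (f := fun u t => ENNReal.ofReal ((1 - Real.cos u) * (t * Real.exp (-(u * t))))) hFmeas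
  have hL : (∫⁻ u, ∫⁻ t, ENNReal.ofReal
        ((1 - Real.cos u) * (t * Real.exp (-(u * t)))) ∂μ ∂μ)
      = ∫⁻ u, ENNReal.ofReal (g u) ∂μ := by
    refine lintegral_congr_ae ?_
    filter_upwards [ae_restrict_mem measurableSet_Ioi] with u hu
    obtain ⟨hval, hint⟩ := kac_lap1 hu
    have hcu : (0:ℝ) ≤ 1 - Real.cos u := by nlinarith [Real.cos_le_one u]
    have hnn : 0 ≤ᵐ[μ] fun t => (1 - Real.cos u) * (t * Real.exp (-(u * t))) := by
      filter_upwards [ae_restrict_mem measurableSet_Ioi] with t htt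
      exact mul_nonneg hcu (mul_nonneg (le_of_lt htt) (Real.exp_pos _).le)
    rw [← ofReal_integral_eq_lintegral_ofReal (hint.const_mul (1 - Real.cos u)) hnn]
    congr 1
    rw [integral_const_mul, hval, hg]
    field_simp
  have hR : (∫⁻ t, ∫⁻ u, ENNReal.ofReal
        ((1 - Real.cos u) * (t * Real.exp (-(u * t)))) ∂μ ∂μ)
      = ENNReal.ofReal (π / 2) := by
    have step1 : (∫⁻ t, ∫⁻ u, ENNReal.ofReal
          ((1 - Real.cos u) * (t * Real.exp (-(u * t)))) ∂μ ∂μ)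
        = ∫⁻ t, ENNReal.ofReal ((1 + t ^ 2)⁻¹) ∂μ := by
      refine lintegral_congr_ae ?_
      filter_upwards [ae_restrict_mem measurableSet_Ioi] with t htt
      obtain ⟨hval, hint⟩ := kac_lap2 htt
      have heq : ∀ u : ℝ, (1 - Real.cos u) * (t * Real.exp (-(u * t)))
          = t * (Real.exp (-(t * u)) * (1 - Real.cos u)) := fun u => by
        rw [mul_comm u t]; ring
      simp only [heq]
      have hnn : 0 ≤ᵐ[μ] fun u => t * (Real.exp (-(t * u)) * (1 - Real.cos u)) := by
        filter_upwards [ae_restrict_mem measurableSet_Ioi] with u _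
        exact mul_nonneg (le_of_lt htt)
          (mul_nonneg (Real.exp_pos _).le (by nlinarith [Real.cos_le_one u]))
      rw [← ofReal_integral_eq_lintegral_ofReal (hint.const_mul t) hnn]
      congr 1
      rw [integral_const_mul, hval]
      have ht' : t ≠ 0 := ne_of_gt (mem_Ioi.mp htt)
      have htsq : (0:ℝ) < t ^ 2 + 1 := by positivity
      field_simp
      ring
    rw [step1]
    have hint2 : IntegrableOn (fun t : ℝ => (1 + t ^ 2)⁻¹) (Ioi (0:ℝ)) :=
      integrable_inv_one_add_sq.integrableOn
    have hnn2 : 0 ≤ᵐ[μ] fun t : ℝ => (1 + t ^ 2)⁻¹ := by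
      filter_upwards with t
      positivity
    rw [← ofReal_integral_eq_lintegral_ofReal hint2 hnn2]
    congr 1
    rw [integral_Ioi_inv_one_add_sq]
    simp [Real.arctan_zero]
  have key : (∫⁻ u, ENNReal.ofReal (g u) ∂μ) = ENNReal.ofReal (π / 2) := by
    rw [← hL, swap, hR]
  have hgint : Integrable g μ := by
    refine ⟨hgmeas.aestronglyMeasurable, ?_⟩
    rw [hasFiniteIntegral_iff_ofReal hgnn, key]
    exact ENNReal.ofReal_lt_top
  have : ∫ u, g u ∂μ = π / 2 := by
    rw [integral_eq_lintegral_of_nonneg_ae hgnn hgmeas.aestronglyMeasurable, key,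
      ENNReal.toReal_ofReal (by positivity)]
  exact this

private lemma kac_full : ∫ u : ℝ, (1 - Real.cos u) / u ^ 2 = π := by
  have heven : (fun u : ℝ => (1 - Real.cos u) / u ^ 2)
      = fun u : ℝ => (1 - Real.cos |u|) / |u| ^ 2 := by
    funext u
    rw [Real.cos_abs, sq_abs]
  rw [heven, integral_comp_abs (f := fun u : ℝ => (1 - Real.cos u) / u ^ 2), kac_core]
  ring

theorem kac_pv_integral (v : ℝ) :
    (1 / π) * ∫ u : ℝ, (1 - Real.cos (u * v)) / u ^ 2 = |v| := by
  rcases eq_or_ne v 0 with rfl | hv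
  · simp
  · have key : ∀ u : ℝ, (1 - Real.cos (u * v)) / u ^ 2
        = v ^ 2 * ((1 - Real.cos (u * v)) / (u * v) ^ 2) := by
      intro u
      rcases eq_or_ne u 0 with rfl | hu
      · simp
      · field_simp
    simp_rw [key]
    rw [integral_const_mul]
    rw [MeasureTheory.Measure.integral_comp_mul_right (fun w : ℝ => (1 - Real.cos w) / w ^ 2) v,
      kac_full]
    have hvabs : (0:ℝ) < |v| := abs_pos.mpr hv
    have hv2 : v ^ 2 = |v| ^ 2 := (sq_abs v).symm
    rw [smul_eq_mul, abs_inv]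
    rw [hv2]
    field_simp [Real.pi_ne_zero]
end

section
/- For h > 0 and real t, ∫_{-∞}^{∞} (e^{tu} - 1 - tu) e^{-h u²/2} / u² du = Σ_{m=1}^{∞} √(2πh)/(m!(2m-1)) · (t²/(2h))^m. -/
open MeasureTheory Real

lemma exp_hasSum' (x : ℝ) : HasSum (fun k : ℕ => x ^ k / k.factorial) (Real.exp x) := by
  rw [Real.exp_eq_exp_ℝ]
  exact NormedSpace.expSeries_div_hasSum_exp x

lemma integrable_pow_gauss {b : ℝ} (hb : 0 < b) (n : ℕ) :
    Integrable (fun u : ℝ => u ^ n * Real.exp (-b * u ^ 2)) := by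
  have h := integrable_rpow_mul_exp_neg_mul_sq hb
    (s := (n : ℝ)) (lt_of_lt_of_le neg_one_lt_zero (Nat.cast_nonneg n))
  simpa [Real.rpow_natCast] using h

lemma integrable_exp_lin {b : ℝ} (hb : 0 < b) (c : ℝ) :
    Integrable (fun u : ℝ => Real.exp (c * u) * Real.exp (-b * u ^ 2)) := by
  have h1 : Integrable (fun u : ℝ => Real.exp (-b * (u - c / (2 * b)) ^ 2)) :=
    (integrable_exp_neg_mul_sq hb).comp_sub_right (c / (2 * b))
  refine (h1.const_mul (Real.exp (c ^ 2 / (4 * b)))).congr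
    (Filter.Eventually.of_forall fun u => ?_)
  simp only [← Real.exp_add]
  congr 1
  field_simp
  ring


lemma odd_moment (b : ℝ) (k : ℕ) :
    ∫ u : ℝ, u ^ (2 * k + 1) * Real.exp (-b * u ^ 2) = 0 := by
  have h := MeasureTheory.integral_neg_eq_self
    (fun u : ℝ => u ^ (2 * k + 1) * Real.exp (-b * u ^ 2)) (volume : Measure ℝ)
  have h2 : ∀ u : ℝ, (-u) ^ (2 * k + 1) * Real.exp (-b * (-u) ^ 2)
      = -(u ^ (2 * k + 1) * Real.exp (-b * u ^ 2)) := by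
    intro u
    rw [Odd.neg_pow ⟨k, by ring⟩, neg_sq]
    ring
  simp only [h2, integral_neg] at h
  linarith

lemma gammaHalf (k : ℕ) :
    Real.Gamma ((k : ℝ) + 1 / 2) = Real.sqrt π * (2 * k).factorial / (4 ^ k * k.factorial) := by
  induction k with
  | zero =>
    rw [show ((0:ℕ):ℝ) + 1/2 = 1/2 by norm_num, Real.Gamma_one_half_eq]
    simp
  | succ n ih =>
    have h1 : ((n + 1 : ℕ) : ℝ) + 1 / 2 = ((n : ℝ) + 1 / 2) + 1 := by push_cast; ring
    rw [h1, Real.Gamma_add_one (by positivity), ih]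
    rw [show 2 * (n + 1) = (2 * n + 1) + 1 by ring, Nat.factorial_succ,
      show 2 * n + 1 = (2 * n) + 1 from rfl, Nat.factorial_succ, Nat.factorial_succ]
    have hf : ((n.factorial : ℝ)) ≠ 0 := Nat.cast_ne_zero.2 n.factorial_ne_zero
    have h4n : (4 : ℝ) ^ n ≠ 0 := by positivity
    push_cast
    rw [show (4 : ℝ) ^ (n + 1) = 4 * 4 ^ n by ring]
    field_simp
    ring

lemma even_moment {b : ℝ} (hb : 0 < b) (k : ℕ) :
    ∫ u : ℝ, u ^ (2 * k) * Real.exp (-b * u ^ 2)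
      = Real.sqrt π / Real.sqrt b * ((2 * k).factorial / (4 ^ k * b ^ k * k.factorial)) := by
  have h3 : ∀ u : ℝ, u ^ (((2 * k : ℕ) : ℝ)) * Real.exp (-b * u ^ (2 : ℝ))
      = u ^ (2 * k) * Real.exp (-b * u ^ 2) := by
    intro u
    rw [Real.rpow_natCast, Real.rpow_two]
  have h1 : ∫ u : ℝ, u ^ (2 * k) * Real.exp (-b * u ^ 2)
      = 2 * ∫ u in Set.Ioi (0 : ℝ), u ^ (2 * k) * Real.exp (-b * u ^ 2) := by
    rw [← integral_comp_abs (f := fun u : ℝ => u ^ (2 * k) * Real.exp (-b * u ^ 2))]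
    simp only [pow_mul, sq_abs]
  have h2 := integral_rpow_mul_exp_neg_mul_rpow (p := 2) (q := ((2 * k : ℕ) : ℝ))
    two_pos (lt_of_lt_of_le neg_one_lt_zero (Nat.cast_nonneg _)) hb
  simp only [h3] at h2
  rw [h1, h2]
  have harg : ((((2 * k : ℕ) : ℝ)) + 1) / 2 = (k : ℝ) + 1 / 2 := by push_cast; ring
  have hbpow : b ^ (-((((2 * k : ℕ) : ℝ)) + 1) / 2) = (b ^ k)⁻¹ * (Real.sqrt b)⁻¹ := by
    rw [show -((((2 * k : ℕ) : ℝ)) + 1) / 2 = (-(k : ℝ)) + (-(1/2)) by push_cast; ring,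
      Real.rpow_add hb, Real.rpow_neg hb.le, Real.rpow_neg hb.le, Real.rpow_natCast,
      ← Real.sqrt_eq_rpow]
  rw [hbpow, harg, gammaHalf]
  have hsb : Real.sqrt b ≠ 0 := ne_of_gt (Real.sqrt_pos.2 hb)
  have hfk : ((k.factorial : ℝ)) ≠ 0 := Nat.cast_ne_zero.2 k.factorial_ne_zero
  have h4k : (4 : ℝ) ^ k ≠ 0 := by positivity
  have hbk : b ^ k ≠ 0 := by positivity
  field_simp

theorem exp_series_gaussian_integral (h t : ℝ) (hh : 0 < h) :
    ∫ u : ℝ, (Real.exp (t * u) - 1 - t * u) * Real.exp (-h * u ^ 2 / 2) / u ^ 2 =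
      ∑' m : ℕ,
        Real.sqrt (2 * π * h) / (((m + 1).factorial : ℝ) * (2 * (m + 1) - 1)) *
          (t ^ 2 / (2 * h)) ^ (m + 1) := by
  have hb : 0 < h / 2 := by linarith
  set F : ℕ → ℝ → ℝ :=
    fun n u => t ^ (n + 2) / (n + 2).factorial * (u ^ n * Real.exp (-(h / 2) * u ^ 2)) with hF
  -- each F n is integrable
  have hFint : ∀ n, Integrable (F n) := fun n =>
    (integrable_pow_gauss hb n).const_mul _
  -- pointwise series representation for u ≠ 0
  have key : ∀ u : ℝ, u ≠ 0 →
      HasSum (fun n => F n u)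
        ((Real.exp (t * u) - 1 - t * u) * Real.exp (-h * u ^ 2 / 2) / u ^ 2) := by
    intro u hu
    have h1 := exp_hasSum' (t * u)
    have h2 : HasSum (fun n : ℕ => (t * u) ^ (n + 2) / (n + 2).factorial)
        (Real.exp (t * u) - ∑ i ∈ Finset.range 2, (t * u) ^ i / i.factorial) :=
      (hasSum_nat_add_iff' 2).mpr h1
    have h3 : (∑ i ∈ Finset.range 2, (t * u) ^ i / (i.factorial : ℝ)) = 1 + t * u := by
      simp [Finset.sum_range_succ]
    rw [h3] at h2
    have h4 := (h2.mul_right (Real.exp (-(h / 2) * u ^ 2))).div_const (u ^ 2)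
    have h5 : (fun n : ℕ => (t * u) ^ (n + 2) / (n + 2).factorial
        * Real.exp (-(h / 2) * u ^ 2) / u ^ 2) = fun n => F n u := by
      funext n
      rw [hF]
      rw [mul_pow, pow_add]
      field_simp
      ring
    rw [h5] at h4
    have h6 : (Real.exp (t * u) - (1 + t * u)) * Real.exp (-(h / 2) * u ^ 2) / u ^ 2
        = (Real.exp (t * u) - 1 - t * u) * Real.exp (-h * u ^ 2 / 2) / u ^ 2 := by
      rw [show -(h / 2) * u ^ 2 = -h * u ^ 2 / 2 by ring]
      ring_nf
    rw [h6] at h4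
    exact h4
  have hae : ∀ᵐ u : ℝ, u ≠ 0 := by
    rw [MeasureTheory.ae_iff]
    simpa using volume_singleton (a := (0 : ℝ))
  -- summability of the integrals of norms
  have hsum : Summable fun n => ∫ u, ‖F n u‖ := by
    set g : ℝ → ℝ := fun u => t ^ 2 *
      (Real.exp (t * u) * Real.exp (-(h / 2) * u ^ 2)
        + Real.exp (-t * u) * Real.exp (-(h / 2) * u ^ 2)) with hg
    have hgint : Integrable g :=
      ((integrable_exp_lin hb t).add (integrable_exp_lin hb (-t))).const_mul _
    have hbound : ∀ N : ℕ, ∀ u : ℝ, (∑ n ∈ Finset.range N, ‖F n u‖) ≤ g u := by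
      intro N u
      have hterm : ∀ n, ‖F n u‖ ≤ t ^ 2 * (|t * u| ^ n / n.factorial)
          * Real.exp (-(h / 2) * u ^ 2) := by
        intro n
        rw [hF]
        have hE : (0 : ℝ) < Real.exp (-(h / 2) * u ^ 2) := Real.exp_pos _
        rw [Real.norm_eq_abs, abs_mul, abs_mul, abs_div, abs_pow, abs_pow,
          abs_of_pos hE, abs_of_nonneg (Nat.cast_nonneg _ : (0:ℝ) ≤ ((n+2).factorial : ℝ))]
        have h1 : |t| ^ (n + 2) = t ^ 2 * |t| ^ n := by
          rw [pow_add, sq_abs]; ring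
        rw [h1, abs_mul, mul_pow]
        have h2 : ((n.factorial : ℝ)) ≤ ((n + 2).factorial : ℝ) :=
          Nat.cast_le.2 (Nat.factorial_le (by omega))
        have hfn : (0:ℝ) < n.factorial := by exact_mod_cast n.factorial_pos
        calc t ^ 2 * |t| ^ n / ((n + 2).factorial : ℝ) * (|u| ^ n * Real.exp (-(h / 2) * u ^ 2))
            ≤ t ^ 2 * |t| ^ n / (n.factorial : ℝ) * (|u| ^ n * Real.exp (-(h / 2) * u ^ 2)) := by
              gcongr
          _ = t ^ 2 * (|t| ^ n * |u| ^ n / n.factorial) * Real.exp (-(h / 2) * u ^ 2) := by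
              ring
      calc (∑ n ∈ Finset.range N, ‖F n u‖)
          ≤ ∑ n ∈ Finset.range N, t ^ 2 * (|t * u| ^ n / n.factorial)
              * Real.exp (-(h / 2) * u ^ 2) := by
            exact Finset.sum_le_sum fun n _ => hterm n
        _ = t ^ 2 * (∑ n ∈ Finset.range N, |t * u| ^ n / n.factorial)
              * Real.exp (-(h / 2) * u ^ 2) := by
            rw [Finset.mul_sum, Finset.sum_mul]
        _ ≤ t ^ 2 * Real.exp |t * u| * Real.exp (-(h / 2) * u ^ 2) := by
            gcongr
            exact Real.sum_le_exp_of_nonneg (abs_nonneg _) N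
        _ ≤ g u := by
            rw [hg]
            have := Real.exp_abs_le (t * u)
            have hE : (0 : ℝ) < Real.exp (-(h / 2) * u ^ 2) := Real.exp_pos _
            have ht2 : (0:ℝ) ≤ t ^ 2 := sq_nonneg t
            calc t ^ 2 * Real.exp |t * u| * Real.exp (-(h / 2) * u ^ 2)
                ≤ t ^ 2 * (Real.exp (t * u) + Real.exp (-(t * u)))
                    * Real.exp (-(h / 2) * u ^ 2) := by gcongr
              _ = t ^ 2 * (Real.exp (t * u) * Real.exp (-(h / 2) * u ^ 2)
                    + Real.exp (-t * u) * Real.exp (-(h / 2) * u ^ 2)) := by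
                  rw [neg_mul]; ring
    apply summable_of_sum_range_le
      (c := ∫ u, g u)
      (fun n => integral_nonneg fun u => norm_nonneg _)
    intro N
    rw [← integral_finset_sum _ (fun n _ => (hFint n).norm)]
    exact integral_mono (integrable_finset_sum _ (fun n _ => (hFint n).norm)) hgint
      (fun u => hbound N u)
  have hne : h ≠ 0 := ne_of_gt hh
  have hsq : Real.sqrt π / Real.sqrt (h / 2) = Real.sqrt (2 * π * h) / h := by
    rw [show 2 * π * h = π / (h / 2) * h ^ 2 by field_simp,
      Real.sqrt_mul (by positivity) (h ^ 2), Real.sqrt_sq hh.le,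
      Real.sqrt_div Real.pi_nonneg]
    field_simp
  calc ∫ u : ℝ, (Real.exp (t * u) - 1 - t * u) * Real.exp (-h * u ^ 2 / 2) / u ^ 2
      = ∫ u : ℝ, ∑' n, F n u := by
        refine integral_congr_ae ?_
        filter_upwards [hae] with u hu
        exact ((key u hu).tsum_eq).symm
    _ = ∑' n, ∫ u, F n u := (integral_tsum_of_summable_integral_norm hFint hsum).symm
    _ = ∑' k : ℕ, ∫ u, F (2 * k) u := by
        refine (Function.Injective.tsum_eq (g := fun k : ℕ => 2 * k)
          (fun a b hab => by simpa using hab) ?_).symm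
        intro n hn
        rcases Nat.even_or_odd n with ⟨k, hk⟩ | ⟨k, hk⟩
        · exact ⟨k, by show 2 * k = n; omega⟩
        · exfalso
          apply hn
          have : (fun u : ℝ => F n u) = fun u : ℝ =>
              t ^ (2 * k + 1 + 2) / ((2 * k + 1 + 2).factorial : ℝ)
                * (u ^ (2 * k + 1) * Real.exp (-(h / 2) * u ^ 2)) := by
            funext u
            rw [hF, hk]
          show (∫ u, F n u) = 0
          rw [this, integral_const_mul, odd_moment, mul_zero]
    _ = ∑' m : ℕ,
        Real.sqrt (2 * π * h) / (((m + 1).factorial : ℝ) * (2 * (m + 1) - 1)) *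
          (t ^ 2 / (2 * h)) ^ (m + 1) := by
        refine tsum_congr fun m => ?_
        have hFm : (fun u : ℝ => F (2 * m) u) = fun u : ℝ =>
            t ^ (2 * m + 2) / ((2 * m + 2).factorial : ℝ)
              * (u ^ (2 * m) * Real.exp (-(h / 2) * u ^ 2)) := by
          funext u; rw [hF]
        rw [show (∫ u, F (2 * m) u) = ∫ u : ℝ, t ^ (2 * m + 2) / ((2 * m + 2).factorial : ℝ)
              * (u ^ (2 * m) * Real.exp (-(h / 2) * u ^ 2)) from by rw [hFm],
          integral_const_mul, even_moment hb m, hsq]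
        set S := Real.sqrt (2 * π * h) with hS
        have e1 : ((2 * m + 2).factorial : ℝ)
            = (2 * (m : ℝ) + 2) * (2 * (m : ℝ) + 1) * ((2 * m).factorial : ℝ) := by
          rw [show 2 * m + 2 = (2 * m + 1) + 1 from rfl, Nat.factorial_succ,
            show 2 * m + 1 = (2 * m) + 1 from rfl, Nat.factorial_succ]
          push_cast; ring
        have e2 : (((m + 1).factorial : ℝ)) = ((m : ℝ) + 1) * (m.factorial : ℝ) := by
          rw [Nat.factorial_succ]; push_cast; ring
        have hf2m : (((2 * m).factorial : ℝ)) ≠ 0 := Nat.cast_ne_zero.2 (Nat.factorial_ne_zero _)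
        have hfm : ((m.factorial : ℝ)) ≠ 0 := Nat.cast_ne_zero.2 (Nat.factorial_ne_zero _)
        have hsh : Real.sqrt (h / 2) ≠ 0 := ne_of_gt (Real.sqrt_pos.2 hb)
        have hm1 : ((m : ℝ) + 1) ≠ 0 := by positivity
        have hm2 : (2 * (m : ℝ) + 1) ≠ 0 := by positivity
        have hm3 : (2 * (m : ℝ) + 2) ≠ 0 := by positivity
        have h2m : (2 : ℝ) ^ m ≠ 0 := by positivity
        have h2m1 : (2 : ℝ) ^ (m + 1) ≠ 0 := by positivity
        have hhm : h ^ m ≠ 0 := pow_ne_zero _ hne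
        have hhm1 : h ^ (m + 1) ≠ 0 := pow_ne_zero _ hne
        rw [e1, e2,
          show (4 : ℝ) ^ m * (h / 2) ^ m * (m.factorial : ℝ)
              = 2 ^ m * h ^ m * (m.factorial : ℝ) from by
            rw [← mul_pow, show (4 : ℝ) * (h / 2) = 2 * h by ring, mul_pow],
          div_pow, mul_pow,
          show (t ^ 2) ^ (m + 1) = t ^ (2 * m + 2) from by
            rw [← pow_mul, show 2 * (m + 1) = 2 * m + 2 from by ring]]
        push_cast
        rw [show 2 * ((m : ℝ) + 1) - 1 = 2 * (m : ℝ) + 1 from by ring]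
        field_simp [hf2m, hfm, hm1, hm2, hm3, h2m, h2m1, hhm, hhm1]
        ring
end

section
/- For A > 0, C > 0, B real with AC - B² ≥ 0 and σ > 0, ∫_{-∞}^{∞} e^{-σ² A y²/2} [√(2πCσ²) - Σ_{m=1}^{∞} (√(2πCσ²)/(m!(2m-1))) (B²σ²y²/(2C))^m ] dy = 2π √(C/A) √(1 - B²/(AC)). -/
open MeasureTheory Real Set Finset

namespace KR

/-! ### The binomial series for `√(1-x)` via Catalan numbers -/

noncomputable def sqCoef : ℕ → ℝ
  | 0 => 1
  | (k+1) => -(2 * (catalan k : ℝ) / 4 ^ (k+1))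

lemma sqCoef_zero : sqCoef 0 = 1 := rfl
lemma sqCoef_succ (k : ℕ) : sqCoef (k+1) = -(2 * (catalan k : ℝ) / 4 ^ (k+1)) := rfl

lemma centralBinom_cast (k : ℕ) :
    (Nat.centralBinom (k+1) : ℝ) = 2 * (2 * (k+1) - 1) * (catalan k : ℝ) := by
  have h1 : (k + 1) * Nat.centralBinom (k+1) = 2 * (2 * k + 1) * Nat.centralBinom k :=
    Nat.succ_mul_centralBinom_succ k
  have h2 : (k + 1) * catalan k = Nat.centralBinom k := succ_mul_catalan_eq_centralBinom k
  have h1' : ((k:ℝ) + 1) * (Nat.centralBinom (k+1) : ℝ)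
      = 2 * (2 * k + 1) * (Nat.centralBinom k : ℝ) := by
    exact_mod_cast congrArg (Nat.cast (R := ℝ)) h1
  have h2' : ((k:ℝ) + 1) * (catalan k : ℝ) = (Nat.centralBinom k : ℝ) := by
    exact_mod_cast congrArg (Nat.cast (R := ℝ)) h2
  have hk : ((k:ℝ) + 1) ≠ 0 := by positivity
  nlinarith [h1', h2']

noncomputable def eSeq (k : ℕ) : ℝ := (Nat.centralBinom k : ℝ) / 4 ^ k

lemma eSeq_zero : eSeq 0 = 1 := by simp [eSeq, Nat.centralBinom]

lemma eSeq_nonneg (k : ℕ) : 0 ≤ eSeq k := by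
  unfold eSeq; positivity

lemma eSeq_sub (k : ℕ) : eSeq k - eSeq (k+1) = 2 * (catalan k : ℝ) / 4 ^ (k+1) := by
  have h := centralBinom_cast k
  have h2' : ((k:ℝ) + 1) * (catalan k : ℝ) = (Nat.centralBinom k : ℝ) := by
    exact_mod_cast congrArg (Nat.cast (R := ℝ)) (succ_mul_catalan_eq_centralBinom k)
  have hk : ((k:ℝ) + 1) ≠ 0 := by positivity
  simp only [eSeq]
  rw [h, ← h2']
  have h4 : (4:ℝ) ^ (k+1) = 4 * 4 ^ k := by ring
  field_simp
  ring

lemma sum_range_sqCoef (N : ℕ) :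
    ∑ k ∈ range N, (2 * (catalan k : ℝ) / 4 ^ (k+1)) = 1 - eSeq N := by
  induction N with
  | zero => simp [eSeq_zero]
  | succ n ih => rw [Finset.sum_range_succ, ih, ← eSeq_sub n]; ring

lemma summable_aux : Summable (fun k : ℕ => 2 * (catalan k : ℝ) / 4 ^ (k+1)) := by
  apply summable_of_sum_range_le (c := 1) (fun k => by positivity)
  intro n
  rw [sum_range_sqCoef]
  have := eSeq_nonneg n
  linarith

lemma tsum_aux_le_one : ∑' k : ℕ, 2 * (catalan k : ℝ) / 4 ^ (k+1) ≤ 1 := by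
  apply tsum_le_of_sum_range_le (fun k => by positivity)
  intro n
  rw [sum_range_sqCoef]
  have := eSeq_nonneg n
  linarith

lemma cauchy_coef (n : ℕ) :
    ∑ k ∈ range (n+1), sqCoef k * sqCoef (n - k)
      = if n = 0 then 1 else if n = 1 then -1 else 0 := by
  match n with
  | 0 => simp [sqCoef_zero]
  | 1 => norm_num [Finset.sum_range_succ, sqCoef_zero, sqCoef_succ]
  | (m+2) =>
    rw [Finset.sum_range_succ']
    rw [Finset.sum_range_succ]
    have htop : sqCoef (m + 1 + 1) * sqCoef (m + 2 - (m + 1 + 1)) = sqCoef (m+2) := by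
      simp [sqCoef_zero]
    have h0 : sqCoef 0 * sqCoef (m + 2 - 0) = sqCoef (m+2) := by simp [sqCoef_zero]
    rw [htop, h0]
    have hmid : ∑ k ∈ range (m+1), sqCoef (k+1) * sqCoef (m + 2 - (k+1))
        = ∑ k ∈ range (m+1), (4 * ((catalan k : ℝ) * (catalan (m - k) : ℝ))) / 4 ^ (m+2) := by
      apply Finset.sum_congr rfl
      intro k hk
      have hk' : k ≤ m := Nat.lt_succ_iff.mp (Finset.mem_range.mp hk)
      have : m + 2 - (k+1) = (m - k) + 1 := by omega
      rw [this, sqCoef_succ, sqCoef_succ]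
      have h4 : (4:ℝ) ^ (k+1) * 4 ^ (m - k + 1) = 4 ^ (m+2) := by
        rw [← pow_add]; congr 1; omega
      field_simp
      rw [← h4]; ring
    have hcat : ∑ k ∈ range (m+1), ((catalan k : ℝ) * (catalan (m - k) : ℝ))
        = (catalan (m+1) : ℝ) := by
      rw [catalan_succ]
      push_cast
      rw [Finset.sum_range]
    rw [hmid, ← Finset.sum_div, ← Finset.mul_sum, hcat, sqCoef_succ]
    have : (m:ℕ) + 2 ≠ 0 := by omega
    simp only [if_neg this, if_neg (by omega : (m:ℕ) + 2 ≠ 1)]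
    field_simp
    ring

lemma summable_abs_sqCoef : Summable (fun k : ℕ => |sqCoef k|) := by
  rw [← summable_nat_add_iff 1]
  have : (fun k : ℕ => |sqCoef (k+1)|) = fun k : ℕ => 2 * (catalan k : ℝ) / 4 ^ (k+1) := by
    funext k
    rw [sqCoef_succ, abs_neg, abs_of_nonneg (by positivity)]
  rw [this]
  exact summable_aux

variable {x : ℝ}

lemma summable_norm_term (hx0 : 0 ≤ x) (hx1 : x ≤ 1) :
    Summable (fun k : ℕ => ‖sqCoef k * x ^ k‖) := by
  apply Summable.of_nonneg_of_le (fun k => norm_nonneg _) (fun k => ?_) summable_abs_sqCoef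
  rw [norm_mul, norm_pow]
  calc ‖sqCoef k‖ * ‖x‖ ^ k ≤ ‖sqCoef k‖ * 1 := by
        apply mul_le_mul_of_nonneg_left _ (norm_nonneg _)
        exact pow_le_one₀ (norm_nonneg _) (by rwa [Real.norm_of_nonneg hx0])
    _ = |sqCoef k| := by rw [mul_one]; rfl

lemma summable_term (hx0 : 0 ≤ x) (hx1 : x ≤ 1) :
    Summable (fun k : ℕ => sqCoef k * x ^ k) :=
  (summable_norm_term hx0 hx1).of_norm

lemma sq_tsum (hx0 : 0 ≤ x) (hx1 : x ≤ 1) :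
    (∑' k : ℕ, sqCoef k * x ^ k) ^ 2 = 1 - x := by
  rw [sq, tsum_mul_tsum_eq_tsum_sum_antidiagonal_of_summable_norm
    (summable_norm_term hx0 hx1) (summable_norm_term hx0 hx1)]
  have hterm : ∀ n : ℕ, ∑ kl ∈ Finset.HasAntidiagonal.antidiagonal n,
      (sqCoef kl.1 * x ^ kl.1) * (sqCoef kl.2 * x ^ kl.2)
      = (if n = 0 then 1 else if n = 1 then -1 else 0) * x ^ n := by
    intro n
    rw [Finset.Nat.sum_antidiagonal_eq_sum_range_succ_mk]
    rw [← cauchy_coef n, Finset.sum_mul]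
    apply Finset.sum_congr rfl
    intro k hk
    have hk' : k ≤ n := Nat.lt_succ_iff.mp (Finset.mem_range.mp hk)
    have : x ^ k * x ^ (n - k) = x ^ n := by rw [← pow_add]; congr 1; omega
    simp only
    rw [← this]; ring
  simp_rw [hterm]
  have hvanish : ∀ n ∉ ({0, 1} : Finset ℕ),
      (if n = 0 then (1:ℝ) else if n = 1 then -1 else 0) * x ^ n = 0 := by
    intro n hn
    simp only [Finset.mem_insert, Finset.mem_singleton] at hn
    push_neg at hn
    rw [if_neg hn.1, if_neg hn.2, zero_mul]
  rw [tsum_eq_sum hvanish]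
  norm_num
  ring

lemma tsum_nonneg_f (hx0 : 0 ≤ x) (hx1 : x ≤ 1) :
    0 ≤ ∑' k : ℕ, sqCoef k * x ^ k := by
  have hsum := summable_term hx0 hx1
  rw [Summable.tsum_eq_zero_add hsum]
  have h1 : ∑' k : ℕ, sqCoef (k+1) * x ^ (k+1)
      = -∑' k : ℕ, (2 * (catalan k : ℝ) / 4 ^ (k+1)) * x ^ (k+1) := by
    rw [← tsum_neg]
    congr 1; funext k; rw [sqCoef_succ]; ring
  rw [h1, show sqCoef 0 * x ^ 0 = 1 by norm_num [sqCoef]]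
  have h2 : ∑' k : ℕ, (2 * (catalan k : ℝ) / 4 ^ (k+1)) * x ^ (k+1) ≤ 1 := by
    calc ∑' k : ℕ, (2 * (catalan k : ℝ) / 4 ^ (k+1)) * x ^ (k+1)
        ≤ ∑' k : ℕ, 2 * (catalan k : ℝ) / 4 ^ (k+1) := by
          apply Summable.tsum_le_tsum _ _ summable_aux
          · intro k
            have : x ^ (k+1) ≤ 1 := pow_le_one₀ hx0 hx1
            nlinarith [this, (by positivity : (0:ℝ) ≤ 2 * (catalan k : ℝ) / 4 ^ (k+1))]
          · apply Summable.of_nonneg_of_le (fun k => by positivity) _ summable_aux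
            intro k
            have : x ^ (k+1) ≤ 1 := pow_le_one₀ hx0 hx1
            nlinarith [this, (by positivity : (0:ℝ) ≤ 2 * (catalan k : ℝ) / 4 ^ (k+1))]
      _ ≤ 1 := tsum_aux_le_one
  linarith

/-- The key series identity: for `x ∈ [0,1]`,
`∑ (2 catalan k / 4^(k+1)) x^(k+1) = 1 - √(1-x)`. -/
lemma hasSum_sqrt_one_sub (hx0 : 0 ≤ x) (hx1 : x ≤ 1) :
    HasSum (fun k : ℕ => (2 * (catalan k : ℝ) / 4 ^ (k+1)) * x ^ (k+1))
      (1 - Real.sqrt (1 - x)) := by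
  have hsum := summable_term hx0 hx1
  have hf : Real.sqrt (1 - x) = ∑' k : ℕ, sqCoef k * x ^ k := by
    rw [← sq_tsum hx0 hx1, Real.sqrt_sq (tsum_nonneg_f hx0 hx1)]
  have hs : Summable (fun k : ℕ => (2 * (catalan k : ℝ) / 4 ^ (k+1)) * x ^ (k+1)) := by
    apply Summable.of_nonneg_of_le (fun k => by positivity) _ summable_aux
    intro k
    have : x ^ (k+1) ≤ 1 := pow_le_one₀ hx0 hx1
    nlinarith [this, (by positivity : (0:ℝ) ≤ 2 * (catalan k : ℝ) / 4 ^ (k+1))]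
  have key : (1 : ℝ) - Real.sqrt (1 - x)
      = ∑' k : ℕ, (2 * (catalan k : ℝ) / 4 ^ (k+1)) * x ^ (k+1) := by
    rw [hf, Summable.tsum_eq_zero_add hsum, show sqCoef 0 * x ^ 0 = 1 by norm_num [sqCoef]]
    have h1 : ∑' k : ℕ, sqCoef (k+1) * x ^ (k+1)
        = -∑' k : ℕ, (2 * (catalan k : ℝ) / 4 ^ (k+1)) * x ^ (k+1) := by
      rw [← tsum_neg]
      congr 1; funext k; rw [sqCoef_succ]; ring
    rw [h1]
    ring
  rw [key]
  exact hs.hasSum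

/-! ### Gaussian moments -/

lemma Gamma_nat_add_half (k : ℕ) :
    Real.Gamma ((k : ℝ) + 1/2) = Real.sqrt π * (2*k).factorial / (4 ^ k * k.factorial) := by
  induction k with
  | zero => simpa using Real.Gamma_one_half_eq
  | succ n ih =>
    have h : ((n:ℝ) + 1) + 1/2 = ((n:ℝ) + 1/2) + 1 := by ring
    rw [Nat.cast_succ, h, Real.Gamma_add_one (by positivity), ih]
    have h2 : (2 * (n+1)).factorial = (2*n+2) * ((2*n+1) * (2*n).factorial) := by
      rw [show 2 * (n+1) = (2*n+1)+1 by ring, Nat.factorial_succ, Nat.factorial_succ]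
    have h3 : (n+1).factorial = (n+1) * n.factorial := Nat.factorial_succ n
    rw [h2, h3]
    push_cast
    have hn4 : (0:ℝ) < 4 ^ n := by positivity
    have hnf : (0:ℝ) < (n.factorial : ℝ) := by exact_mod_cast Nat.factorial_pos n
    field_simp
    ring

lemma integrable_pow_exp {a : ℝ} (ha : 0 < a) (n : ℕ) :
    Integrable (fun y : ℝ => y ^ n * Real.exp (-a * y ^ 2)) := by
  have := integrable_rpow_mul_exp_neg_mul_sq ha
    (s := n) (lt_of_lt_of_le neg_one_lt_zero (Nat.cast_nonneg n))
  simpa [Real.rpow_natCast] using this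

lemma integral_pow_mul_exp {a : ℝ} (ha : 0 < a) (k : ℕ) :
    ∫ y : ℝ, y ^ (2*k) * Real.exp (-a * y ^ 2)
      = Real.sqrt (π / a) * (2*k).factorial / (k.factorial * (4*a) ^ k) := by
  have heven : ∀ y : ℝ, |y| ^ (2*k) * Real.exp (-a * |y| ^ 2)
      = y ^ (2*k) * Real.exp (-a * y ^ 2) := by
    intro y
    rw [pow_mul, pow_mul, sq_abs]
  have h1 : ∫ y : ℝ, y ^ (2*k) * Real.exp (-a * y ^ 2)
      = 2 * ∫ y in Ioi (0:ℝ), y ^ (2*k) * Real.exp (-a * y ^ 2) := by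
    rw [← integral_comp_abs (f := fun y => y ^ (2*k) * Real.exp (-a * y ^ 2))]
    exact (integral_congr_ae (Filter.Eventually.of_forall heven)).symm
  have h2 : ∫ y in Ioi (0:ℝ), y ^ (2*k) * Real.exp (-a * y ^ 2)
      = a ^ (-(((2*k : ℕ):ℝ)+1)/2) * (1/2) * Real.Gamma ((((2*k : ℕ):ℝ)+1)/2) := by
    have := integral_rpow_mul_exp_neg_mul_rpow (p := 2) (q := ((2*k : ℕ) : ℝ)) (b := a)
      (by norm_num) (lt_of_lt_of_le neg_one_lt_zero (Nat.cast_nonneg _)) ha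
    rw [← this]
    apply setIntegral_congr_fun measurableSet_Ioi
    intro y hy
    show y ^ (2*k) * Real.exp (-a * y ^ 2) = y ^ (((2*k : ℕ):ℝ)) * Real.exp (-a * y ^ (2:ℝ))
    rw [Real.rpow_natCast, Real.rpow_two]
  rw [h1, h2, show ((((2*k : ℕ):ℝ))+1)/2 = (k:ℝ) + 1/2 by push_cast; ring, Gamma_nat_add_half]
  have hrw : a ^ (-(((2*k : ℕ):ℝ)+1)/2) = (a ^ k * Real.sqrt a)⁻¹ := by
    rw [show (-(((2*k : ℕ):ℝ)+1)/2) = -((k:ℝ) + 1/2) by push_cast; ring, Real.rpow_neg ha.le,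
      Real.rpow_add ha, Real.rpow_natCast, ← Real.sqrt_eq_rpow]
  rw [hrw]
  rw [Real.sqrt_div pi_pos.le a, mul_pow]
  have hsa : (0:ℝ) < Real.sqrt a := Real.sqrt_pos.mpr ha
  have hak : (0:ℝ) < a ^ k := by positivity
  have hkf : (0:ℝ) < (k.factorial : ℝ) := by exact_mod_cast Nat.factorial_pos k
  have h4 : (0:ℝ) < (4:ℝ) ^ k := by positivity
  field_simp

lemma alg_aux (k : ℕ) (P S G cat F D r u a : ℝ) (hF : F ≠ 0) (hD : D ≠ 0) (ha : 0 < a)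
    (hP : S * G = P) (hpow : r ^ k * 4 ^ k = u ^ k * (4*a) ^ k) :
    -(S / (F * D) * r ^ k) * (G * (2 * D * cat * F ^ 2) / (F * (4*a) ^ k))
      = -(P * (2 * cat / 4 ^ k * u ^ k)) := by
  have hQ : ((4:ℝ)*a) ^ k ≠ 0 := by positivity
  have h4 : ((4:ℝ)) ^ k ≠ 0 := by positivity
  rw [← hP, mul_pow] at *
  field_simp
  have hr : r ^ k = u ^ k * a ^ k := by
    apply mul_right_cancel₀ h4
    linear_combination hpow
  linear_combination (-(S * G * cat)) * hr

end KR

open KR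

set_option maxHeartbeats 2000000 in
theorem final_y_integration (A B C σ : ℝ) (hA : 0 < A) (hC : 0 < C)
    (hABC : 0 ≤ A * C - B ^ 2) (hσ : 0 < σ) :
    ∫ y : ℝ,
        Real.exp (-σ ^ 2 * A * y ^ 2 / 2) *
          (Real.sqrt (2 * π * C * σ ^ 2) -
            ∑' m : ℕ,
              Real.sqrt (2 * π * C * σ ^ 2) / (((m + 1).factorial : ℝ) * (2 * (m + 1) - 1)) *
                (B ^ 2 * σ ^ 2 * y ^ 2 / (2 * C)) ^ (m + 1)) =
      2 * π * Real.sqrt (C / A) * Real.sqrt (1 - B ^ 2 / (A * C)) := by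
  set a : ℝ := σ ^ 2 * A / 2 with ha_def
  have ha : 0 < a := by positivity
  set S : ℝ := Real.sqrt (2 * π * C * σ ^ 2) with hS_def
  have hS : 0 ≤ S := Real.sqrt_nonneg _
  set r : ℝ := B ^ 2 * σ ^ 2 / (2 * C) with hr_def
  have hr : 0 ≤ r := by positivity
  set u : ℝ := B ^ 2 / (A * C) with hu_def
  have hu0 : 0 ≤ u := by positivity
  have hu1 : u ≤ 1 := by
    rw [hu_def, div_le_one (by positivity)]
    nlinarith [hABC]
  set P : ℝ := 2 * π * Real.sqrt (C / A) with hP_def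
  -- the individual terms, as functions of y
  have hfac_pos : ∀ m : ℕ, (0:ℝ) < ((m + 1).factorial : ℝ) :=
    fun m => by exact_mod_cast Nat.factorial_pos _
  have hden_pos : ∀ m : ℕ, (0:ℝ) < (2 * ((m:ℝ) + 1) - 1) := fun m => by
    have : (0:ℝ) ≤ (m:ℝ) := Nat.cast_nonneg m
    linarith
  set H : ℕ → ℝ → ℝ := fun n => Nat.casesOn n
    (fun y => Real.exp (-σ ^ 2 * A * y ^ 2 / 2) * S)
    (fun m y => -(Real.exp (-σ ^ 2 * A * y ^ 2 / 2) *
      (S / (((m + 1).factorial : ℝ) * (2 * ((m:ℝ) + 1) - 1)) *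
        (B ^ 2 * σ ^ 2 * y ^ 2 / (2 * C)) ^ (m + 1)))) with hH_def
  have hH0 : ∀ y : ℝ, H 0 y = Real.exp (-σ ^ 2 * A * y ^ 2 / 2) * S := fun _ => rfl
  have hHsucc : ∀ (m : ℕ) (y : ℝ), H (m+1) y
      = -(Real.exp (-σ ^ 2 * A * y ^ 2 / 2) *
      (S / (((m + 1).factorial : ℝ) * (2 * ((m:ℝ) + 1) - 1)) *
        (B ^ 2 * σ ^ 2 * y ^ 2 / (2 * C)) ^ (m + 1))) := fun _ _ => rfl
  have hexp : ∀ y : ℝ, Real.exp (-σ ^ 2 * A * y ^ 2 / 2) = Real.exp (-a * y ^ 2) := by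
    intro y; congr 1; rw [ha_def]; ring
  -- pointwise summability of the inner series
  have hptsum : ∀ y : ℝ, Summable (fun m : ℕ =>
      S / (((m + 1).factorial : ℝ) * (2 * ((m:ℝ) + 1) - 1)) *
        (B ^ 2 * σ ^ 2 * y ^ 2 / (2 * C)) ^ (m + 1)) := by
    intro y
    set x := B ^ 2 * σ ^ 2 * y ^ 2 / (2 * C) with hx_def
    have hx : 0 ≤ x := by positivity
    have hbase : Summable (fun m : ℕ => S * (x ^ (m+1) / ((m+1).factorial : ℝ))) :=
      Summable.mul_left S ((summable_nat_add_iff 1).mpr (Real.summable_pow_div_factorial x))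
    apply Summable.of_nonneg_of_le _ _ hbase
    · intro m
      exact mul_nonneg (div_nonneg hS (mul_pos (hfac_pos m) (hden_pos m)).le)
        (pow_nonneg hx _)
    · intro m
      have hFD : ((m+1).factorial : ℝ) ≤ ((m+1).factorial : ℝ) * (2 * ((m:ℝ) + 1) - 1) :=
        le_mul_of_one_le_right (hfac_pos m).le
          (by have : (0:ℝ) ≤ (m:ℝ) := Nat.cast_nonneg m; linarith)
      have h1 : S / (((m+1).factorial : ℝ) * (2 * ((m:ℝ) + 1) - 1))
          ≤ S / ((m+1).factorial : ℝ) :=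
        div_le_div_of_nonneg_left hS (hfac_pos m) hFD
      calc S / (((m+1).factorial : ℝ) * (2 * ((m:ℝ) + 1) - 1)) * x ^ (m+1)
          ≤ S / ((m+1).factorial : ℝ) * x ^ (m+1) :=
            mul_le_mul_of_nonneg_right h1 (pow_nonneg hx _)
        _ = S * (x ^ (m+1) / ((m+1).factorial : ℝ)) := by ring
  -- the integrand is the tsum of H
  have hpointwise : ∀ y : ℝ,
      Real.exp (-σ ^ 2 * A * y ^ 2 / 2) *
          (S - ∑' m : ℕ,
              S / (((m + 1).factorial : ℝ) * (2 * ((m:ℝ) + 1) - 1)) *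
                (B ^ 2 * σ ^ 2 * y ^ 2 / (2 * C)) ^ (m + 1))
        = ∑' n : ℕ, H n y := by
    intro y
    have hsummH1 : Summable (fun m : ℕ => H (m+1) y) := by
      simp_rw [hHsucc]
      exact ((hptsum y).mul_left _).neg
    have hsummH : Summable (fun n : ℕ => H n y) := by
      rwa [← summable_nat_add_iff 1]
    rw [Summable.tsum_eq_zero_add hsummH, hH0]
    have h2 : ∑' m : ℕ, H (m+1) y
        = -(Real.exp (-σ ^ 2 * A * y ^ 2 / 2) * ∑' m : ℕ,
            S / (((m + 1).factorial : ℝ) * (2 * ((m:ℝ) + 1) - 1)) *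
              (B ^ 2 * σ ^ 2 * y ^ 2 / (2 * C)) ^ (m + 1)) := by
      rw [← tsum_mul_left, ← tsum_neg]
    rw [h2]
    ring
  -- rewriting of H as a multiple of y^(2k) * exp (-a y^2)
  have hH0fun : H 0 = fun y => S * (y ^ (2*0) * Real.exp (-a * y ^ 2)) := by
    funext y
    rw [hH0, hexp y]; ring
  have hHsuccfun : ∀ m : ℕ, H (m+1) = fun y =>
      (-(S / (((m + 1).factorial : ℝ) * (2 * ((m:ℝ) + 1) - 1)) * r ^ (m+1))) *
        (y ^ (2*(m+1)) * Real.exp (-a * y ^ 2)) := by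
    intro m
    funext y
    rw [hHsucc, hexp y]
    have hx : (B ^ 2 * σ ^ 2 * y ^ 2 / (2 * C)) ^ (m + 1) = r ^ (m+1) * y ^ (2*(m+1)) := by
      rw [hr_def, show B ^ 2 * σ ^ 2 * y ^ 2 / (2 * C) = (B ^ 2 * σ ^ 2 / (2 * C)) * y ^ 2 by ring,
        mul_pow, ← pow_mul]
    rw [hx]; ring
  -- each H n is integrable
  have hHint : ∀ n : ℕ, Integrable (H n) := by
    intro n
    match n with
    | 0 => rw [hH0fun]; exact (integrable_pow_exp ha (2*0)).const_mul S
    | (m+1) => rw [hHsuccfun m]; exact (integrable_pow_exp ha (2*(m+1))).const_mul _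
  -- the base Gaussian integral
  have hN1 : S * Real.sqrt (π / a) = P := by
    rw [hS_def, hP_def, ← Real.sqrt_mul (by positivity) (π / a)]
    have : 2 * π * C * σ ^ 2 * (π / a) = (2*π)^2 * (C / A) := by
      rw [ha_def]; field_simp
    rw [this, Real.sqrt_mul (by positivity) (C / A),
      show ((2*π)^2 : ℝ) = (2*π)^2 from rfl, Real.sqrt_sq (by positivity)]
  -- value of each integral
  have hval0 : ∫ y : ℝ, H 0 y = P := by
    rw [hH0fun, integral_const_mul, integral_pow_mul_exp ha 0]
    simp only [Nat.mul_zero, Nat.factorial_zero, pow_zero, Nat.cast_one]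
    rw [show Real.sqrt (π / a) * 1 / (1 * 1) = Real.sqrt (π / a) by ring, hN1]
  have hvalsucc : ∀ m : ℕ, ∫ y : ℝ, H (m+1) y
      = -(P * ((2 * (catalan m : ℝ) / 4 ^ (m+1)) * u ^ (m+1))) := by
    intro m
    rw [hHsuccfun m, integral_const_mul, integral_pow_mul_exp ha (m+1)]
    have hcb : ((2*(m+1)).factorial : ℝ)
        = (Nat.centralBinom (m+1) : ℝ) * ((m+1).factorial : ℝ) ^ 2 := by
      have h := Nat.choose_mul_factorial_mul_factorial (Nat.le_mul_of_pos_left (m+1) two_pos)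
      have h2 : 2*(m+1) - (m+1) = m+1 := by omega
      rw [h2] at h
      have : Nat.centralBinom (m+1) = (2*(m+1)).choose (m+1) := rfl
      rw [this]
      have := congrArg (Nat.cast (R := ℝ)) h
      push_cast at this ⊢
      linear_combination -this
    rw [hcb, centralBinom_cast m]
    have hQ : (0:ℝ) < (4*a) ^ (m+1) := by positivity
    have h4 : (0:ℝ) < (4:ℝ) ^ (m+1) := by positivity
    have hpow : r ^ (m+1) * 4 ^ (m+1) = u ^ (m+1) * (4*a) ^ (m+1) := by
      have hru : r * 4 = u * (4 * a) := by
        rw [hr_def, hu_def, ha_def]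
        field_simp
      calc r ^ (m+1) * 4 ^ (m+1) = (r * 4) ^ (m+1) := by rw [mul_pow]
        _ = (u * (4*a)) ^ (m+1) := by rw [hru]
        _ = u ^ (m+1) * (4*a) ^ (m+1) := by rw [mul_pow]
    exact alg_aux (m+1) P S (Real.sqrt (π / a)) (catalan m : ℝ) ((m+1).factorial : ℝ)
      (2 * ((m:ℝ) + 1) - 1) r u a (hfac_pos m).ne' (hden_pos m).ne' ha hN1 hpow
  -- summability of the norms of the integrals
  have hnormsucc : ∀ m : ℕ, (∫ y : ℝ, ‖H (m+1) y‖)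
      = P * ((2 * (catalan m : ℝ) / 4 ^ (m+1)) * u ^ (m+1)) := by
    intro m
    have hle : ∀ y : ℝ, H (m+1) y ≤ 0 := by
      intro y
      rw [hHsucc m y]
      have h0 : (0:ℝ) ≤ Real.exp (-σ ^ 2 * A * y ^ 2 / 2) *
          (S / (((m + 1).factorial : ℝ) * (2 * ((m:ℝ) + 1) - 1)) *
            (B ^ 2 * σ ^ 2 * y ^ 2 / (2 * C)) ^ (m + 1)) :=
        mul_nonneg (Real.exp_nonneg _)
          (mul_nonneg (div_nonneg hS (mul_pos (hfac_pos m) (hden_pos m)).le)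
            (pow_nonneg (by positivity) _))
      linarith
    have heq : (fun y : ℝ => ‖H (m+1) y‖) = fun y => -(H (m+1) y) := by
      funext y
      rw [Real.norm_eq_abs, abs_of_nonpos (hle y)]
    rw [heq, integral_neg, hvalsucc m]
    ring
  have hnorm : Summable (fun n : ℕ => ∫ y : ℝ, ‖H n y‖) := by
    rw [← summable_nat_add_iff 1]
    simp_rw [hnormsucc]
    apply Summable.mul_left
    exact (hasSum_sqrt_one_sub hu0 hu1).summable
  -- interchange sum and integral
  have hswap : HasSum (fun n : ℕ => ∫ y : ℝ, H n y) (∫ y : ℝ, ∑' n : ℕ, H n y) :=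
    hasSum_integral_of_summable_integral_norm hHint hnorm
  have hsummable : Summable (fun n : ℕ => ∫ y : ℝ, H n y) := hswap.summable
  calc ∫ y : ℝ,
        Real.exp (-σ ^ 2 * A * y ^ 2 / 2) *
          (Real.sqrt (2 * π * C * σ ^ 2) -
            ∑' m : ℕ,
              Real.sqrt (2 * π * C * σ ^ 2) / (((m + 1).factorial : ℝ) * (2 * (m + 1) - 1)) *
                (B ^ 2 * σ ^ 2 * y ^ 2 / (2 * C)) ^ (m + 1))
      = ∫ y : ℝ, ∑' n : ℕ, H n y := by
        apply integral_congr_ae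
        exact Filter.Eventually.of_forall fun y => hpointwise y
    _ = ∑' n : ℕ, ∫ y : ℝ, H n y := hswap.tsum_eq.symm
    _ = (∫ y : ℝ, H 0 y) + ∑' m : ℕ, ∫ y : ℝ, H (m+1) y := Summable.tsum_eq_zero_add hsummable
    _ = P + -(P * (1 - Real.sqrt (1 - u))) := by
        rw [hval0]
        congr 1
        simp_rw [hvalsucc]
        exact (((hasSum_sqrt_one_sub hu0 hu1).mul_left P).neg).tsum_eq
    _ = P * Real.sqrt (1 - u) := by ring
    _ = 2 * π * Real.sqrt (C / A) * Real.sqrt (1 - B ^ 2 / (A * C)) := by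
        rw [hP_def, hu_def]
end
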